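/- Let M be an AW*-algebra with generalized comparability and let p, q be projections in M. Then there exists a projection r in M such that r is Murray–von Neumann subequivalent to both p and q, and every projection r' that is subequivalent to both p and q is subequivalent to r. Explicitly, if z is a central projection with zp ≾ zq and (1−z)p ≿ (1−z)q, then r = zp + (1−z)q works. -/
import Mathlib


namespace AWStar

/- STATEMENT 19: in an AW*-algebra (formalized as a unital C*-algebra) with
generalized comparability, any two projections `p, q` admit a largest common
subequivalent projection, explicitly given by `r = z p + (1 - z) q` for a central
projection `z` with `z p ≾ z q` and `(1 - z) p ≿ (1 - z) q`. -/

variable {M : Type*} [CStarAlgebra M] [PartialOrder M] [StarOrderedRing M]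

/-- A projection: a self-adjoint idempotent. -/
def IsProj (p : M) : Prop := IsSelfAdjoint p ∧ p * p = p

/-- Murray–von Neumann subequivalence of projections:
`p ≾ q` iff `p = v v*` and `v* v ≤ q` for some `v`. -/
def MvNLE (p q : M) : Prop := ∃ v : M, p = v * star v ∧ star v * v ≤ q

lemma isProj_one_sub {z : M} (hz : IsProj z) : IsProj (1 - z) := by
  constructor
  · simp [IsSelfAdjoint, star_sub, hz.1.star_eq]
  · have h : (1 - z) * (1 - z) = 1 - z - z + z * z := by noncomm_ring
    rw [h, hz.2]; abel

lemma central_one_sub {z : M} (hc : ∀ a : M, z * a = a * z) :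
    ∀ a : M, (1 - z) * a = a * (1 - z) := fun a => by
  rw [sub_mul, mul_sub, one_mul, mul_one, hc]

lemma central_conj {z : M} (hc : ∀ a : M, z * a = a * z) (hz2 : z * z = z)
    (x : M) : z * x * z = z * x := by
  rw [mul_assoc, ← hc x, ← mul_assoc, hz2]

lemma central_mul_le {z x y : M} (hz : IsProj z) (hc : ∀ a : M, z * a = a * z)
    (h : x ≤ y) : z * x ≤ z * y := by
  have h2 := IsSelfAdjoint.conjugate_le_conjugate h hz.1
  rwa [central_conj hc hz.2, central_conj hc hz.2] at h2

lemma central_mul_proj {z e : M} (hz : IsProj z) (hc : ∀ a : M, z * a = a * z)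
    (he : IsProj e) : IsProj (z * e) := by
  constructor
  · have h1 : star (z * e) = e * z := by rw [star_mul, hz.1.star_eq, he.1.star_eq]
    rw [IsSelfAdjoint, h1, ← hc]
  · calc z * e * (z * e) = z * (e * z) * e := by rw [mul_assoc, mul_assoc, mul_assoc]
      _ = z * (z * e) * e := by rw [← hc]
      _ = (z * z) * (e * e) := by rw [mul_assoc, mul_assoc, mul_assoc]
      _ = z * e := by rw [hz.2, he.2]

/-- Support absorption: if `w w* = e` with `e` a projection, then `e w = w`. -/
lemma absorb {e w : M} (he : IsProj e) (h : w * star w = e) : e * w = w := by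
  have h1 : ((1 - e) * w) * star ((1 - e) * w) = 0 := by
    have hs : star ((1 - e) * w) = star w * (1 - e) := by
      rw [star_mul, (isProj_one_sub he).1.star_eq]
    rw [hs]
    calc (1 - e) * w * (star w * (1 - e)) = ((1 - e) * (w * star w)) * (1 - e) := by
          rw [mul_assoc, mul_assoc, mul_assoc]
      _ = ((1 - e) * e) * (1 - e) := by rw [h]
      _ = 0 := by rw [sub_mul, one_mul, he.2, sub_self, zero_mul]
  have h2 : (1 - e) * w = 0 := (CStarRing.mul_star_self_eq_zero_iff _).mp h1
  rw [sub_mul, one_mul, sub_eq_zero] at h2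
  exact h2.symm

/-- Orthogonal sum of subequivalences over a central projection. -/
lemma orth_add {z : M} (hz : IsProj z) (hc : ∀ a : M, z * a = a * z)
    {v₁ v₂ y₁ y₂ : M} (hv₁ : z * v₁ = v₁) (hv₂ : (1 - z) * v₂ = v₂)
    (h₁ : star v₁ * v₁ ≤ y₁) (h₂ : star v₂ * v₂ ≤ y₂) :
    MvNLE (v₁ * star v₁ + v₂ * star v₂) (y₁ + y₂) := by
  have hz0 : z * (1 - z) = 0 := by rw [mul_sub, mul_one, hz.2, sub_self]
  have cross1 : v₁ * star v₂ = 0 := by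
    calc v₁ * star v₂ = (z * v₁) * star ((1 - z) * v₂) := by rw [hv₁, hv₂]
      _ = z * v₁ * (star v₂ * (1 - z)) := by
          rw [star_mul, (isProj_one_sub hz).1.star_eq]
      _ = z * (v₁ * star v₂) * (1 - z) := by rw [mul_assoc, mul_assoc, mul_assoc]
      _ = (v₁ * star v₂) * z * (1 - z) := by rw [hc]
      _ = (v₁ * star v₂) * (z * (1 - z)) := by rw [mul_assoc]
      _ = 0 := by rw [hz0, mul_zero]
  have cross1' : v₂ * star v₁ = 0 := by
    have := congrArg star cross1
    rwa [star_mul, star_star, star_zero] at this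
  have cross2 : star v₁ * v₂ = 0 := by
    calc star v₁ * v₂ = star (z * v₁) * ((1 - z) * v₂) := by rw [hv₁, hv₂]
      _ = (star v₁ * z) * ((1 - z) * v₂) := by rw [star_mul, hz.1.star_eq]
      _ = star v₁ * (z * (1 - z)) * v₂ := by rw [mul_assoc, mul_assoc, mul_assoc]
      _ = 0 := by rw [hz0, mul_zero, zero_mul]
  have cross2' : star v₂ * v₁ = 0 := by
    have := congrArg star cross2
    rwa [star_mul, star_star, star_zero] at this
  refine ⟨v₁ + v₂, ?_, ?_⟩
  · rw [star_add, add_mul, mul_add, mul_add, cross1, cross1']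
    abel
  · rw [star_add, add_mul, mul_add, mul_add, cross2, cross2']
    calc star v₁ * v₁ + 0 + (0 + star v₂ * v₂) = star v₁ * v₁ + star v₂ * v₂ := by abel
      _ ≤ y₁ + y₂ := add_le_add h₁ h₂

theorem exists_largest_common_subequivalent_projection
    (hgc : ∀ e f : M, IsProj e → IsProj f → ∃ z : M, IsProj z ∧
      (∀ a : M, z * a = a * z) ∧
      MvNLE (z * e) (z * f) ∧ MvNLE ((1 - z) * f) ((1 - z) * e))
    (p q : M) (hp : IsProj p) (hq : IsProj q) :
    (∃ r : M, IsProj r ∧ MvNLE r p ∧ MvNLE r q ∧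
      ∀ r' : M, IsProj r' → MvNLE r' p → MvNLE r' q → MvNLE r' r) ∧
    (∀ z : M, IsProj z → (∀ a : M, z * a = a * z) →
      MvNLE (z * p) (z * q) → MvNLE ((1 - z) * q) ((1 - z) * p) →
      IsProj (z * p + (1 - z) * q) ∧
      MvNLE (z * p + (1 - z) * q) p ∧ MvNLE (z * p + (1 - z) * q) q ∧
      ∀ r' : M, IsProj r' → MvNLE r' p → MvNLE r' q →
        MvNLE r' (z * p + (1 - z) * q)) := by
  have key : ∀ z : M, IsProj z → (∀ a : M, z * a = a * z) →
      MvNLE (z * p) (z * q) → MvNLE ((1 - z) * q) ((1 - z) * p) →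
      IsProj (z * p + (1 - z) * q) ∧
      MvNLE (z * p + (1 - z) * q) p ∧ MvNLE (z * p + (1 - z) * q) q ∧
      ∀ r' : M, IsProj r' → MvNLE r' p → MvNLE r' q →
        MvNLE r' (z * p + (1 - z) * q) := by
    intro z hz hc h1 h2
    have hz' : IsProj (1 - z) := isProj_one_sub hz
    have hc' : ∀ a : M, (1 - z) * a = a * (1 - z) := central_one_sub hc
    have hz0 : z * (1 - z) = 0 := by rw [mul_sub, mul_one, hz.2, sub_self]
    have hzp : IsProj (z * p) := central_mul_proj hz hc hp
    have hzq' : IsProj ((1 - z) * q) := central_mul_proj hz' hc' hq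
    have hsum_p : z * p + (1 - z) * p = p := by rw [sub_mul, one_mul]; abel
    have hsum_q : z * q + (1 - z) * q = q := by rw [sub_mul, one_mul]; abel
    -- r is a projection
    have hrproj : IsProj (z * p + (1 - z) * q) := by
      constructor
      · exact hzp.1.add hzq'.1
      · have c1 : (z * p) * ((1 - z) * q) = 0 := by
          calc (z * p) * ((1 - z) * q) = z * (p * (1 - z)) * q := by
                rw [mul_assoc, mul_assoc, mul_assoc]
            _ = z * ((1 - z) * p) * q := by rw [← hc']
            _ = (z * (1 - z)) * (p * q) := by rw [mul_assoc, mul_assoc, mul_assoc]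
            _ = 0 := by rw [hz0, zero_mul]
        have c2 : ((1 - z) * q) * (z * p) = 0 := by
          calc ((1 - z) * q) * (z * p) = (1 - z) * (q * z) * p := by
                rw [mul_assoc, mul_assoc, mul_assoc]
            _ = (1 - z) * (z * q) * p := by rw [← hc]
            _ = ((1 - z) * z) * (q * p) := by rw [mul_assoc, mul_assoc, mul_assoc]
            _ = 0 := by rw [sub_mul, one_mul, hz.2, sub_self, zero_mul]
        rw [add_mul, mul_add, mul_add, hzp.2, hzq'.2, c1, c2]
        abel
    refine ⟨hrproj, ?_, ?_, ?_⟩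
    -- r ≾ p
    · obtain ⟨w, hw1, hw2⟩ := h2
      have hwabs : ((1 - z) * q) * w = w := absorb hzq' hw1.symm
      have hwz : (1 - z) * w = w := by
        calc (1 - z) * w = (1 - z) * (((1 - z) * q) * w) := by rw [hwabs]
          _ = (((1 - z) * (1 - z)) * q) * w := by rw [← mul_assoc, ← mul_assoc]
          _ = ((1 - z) * q) * w := by rw [hz'.2]
          _ = w := hwabs
      have hv₁ : z * (z * p) = z * p := by rw [← mul_assoc, hz.2]
      have hv₁l : (z * p) * star (z * p) = z * p := by
        rw [hzp.1.star_eq, hzp.2]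
      have hv₁r : star (z * p) * (z * p) ≤ z * p := by
        rw [hzp.1.star_eq, hzp.2]
      have h := orth_add hz hc hv₁ hwz hv₁r hw2
      rw [hv₁l, ← hw1, hsum_p] at h
      exact h
    -- r ≾ q
    · obtain ⟨u, hu1, hu2⟩ := h1
      have huabs : (z * p) * u = u := absorb hzp hu1.symm
      have huz : z * u = u := by
        calc z * u = z * ((z * p) * u) := by rw [huabs]
          _ = ((z * z) * p) * u := by rw [← mul_assoc, ← mul_assoc]
          _ = (z * p) * u := by rw [hz.2]
          _ = u := huabs
      have hv₂ : (1 - z) * ((1 - z) * q) = (1 - z) * q := by rw [← mul_assoc, hz'.2]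
      have hv₂l : ((1 - z) * q) * star ((1 - z) * q) = (1 - z) * q := by
        rw [hzq'.1.star_eq, hzq'.2]
      have hv₂r : star ((1 - z) * q) * ((1 - z) * q) ≤ (1 - z) * q := by
        rw [hzq'.1.star_eq, hzq'.2]
      have h := orth_add hz hc huz hv₂ hu2 hv₂r
      rw [hv₂l, ← hu1, hsum_q] at h
      exact h
    -- maximality
    · intro r' hr' hrp hrq
      obtain ⟨a, ha1, ha2⟩ := hrp
      obtain ⟨c, hc1, hc2⟩ := hrq
      have hv₁ : z * (z * a) = z * a := by rw [← mul_assoc, hz.2]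
      have hv₂ : (1 - z) * ((1 - z) * c) = (1 - z) * c := by rw [← mul_assoc, hz'.2]
      have hv₁l : (z * a) * star (z * a) = z * r' := by
        calc (z * a) * star (z * a) = (z * a) * (star a * z) := by
              rw [star_mul, hz.1.star_eq]
          _ = z * (a * star a) * z := by rw [mul_assoc, mul_assoc, mul_assoc]
          _ = z * (a * star a) := central_conj hc hz.2 _
          _ = z * r' := by rw [← ha1]
      have hv₂l : ((1 - z) * c) * star ((1 - z) * c) = (1 - z) * r' := by
        calc ((1 - z) * c) * star ((1 - z) * c) = ((1 - z) * c) * (star c * (1 - z)) := by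
              rw [star_mul, hz'.1.star_eq]
          _ = (1 - z) * (c * star c) * (1 - z) := by rw [mul_assoc, mul_assoc, mul_assoc]
          _ = (1 - z) * (c * star c) := central_conj hc' hz'.2 _
          _ = (1 - z) * r' := by rw [← hc1]
      have hv₁r : star (z * a) * (z * a) ≤ z * p := by
        have heq : star (z * a) * (z * a) = z * (star a * a) := by
          calc star (z * a) * (z * a) = (star a * z) * (z * a) := by
                rw [star_mul, hz.1.star_eq]
            _ = star a * (z * z) * a := by rw [mul_assoc, mul_assoc, mul_assoc]
            _ = star a * z * a := by rw [hz.2]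
            _ = (z * star a) * a := by rw [hc]
            _ = z * (star a * a) := by rw [mul_assoc]
        rw [heq]
        exact central_mul_le hz hc ha2
      have hv₂r : star ((1 - z) * c) * ((1 - z) * c) ≤ (1 - z) * q := by
        have heq : star ((1 - z) * c) * ((1 - z) * c) = (1 - z) * (star c * c) := by
          calc star ((1 - z) * c) * ((1 - z) * c) = (star c * (1 - z)) * ((1 - z) * c) := by
                rw [star_mul, hz'.1.star_eq]
            _ = star c * ((1 - z) * (1 - z)) * c := by rw [mul_assoc, mul_assoc, mul_assoc]
            _ = star c * (1 - z) * c := by rw [hz'.2]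
            _ = ((1 - z) * star c) * c := by rw [hc']
            _ = (1 - z) * (star c * c) := by rw [mul_assoc]
        rw [heq]
        exact central_mul_le hz' hc' hc2
      have h := orth_add hz hc hv₁ hv₂ hv₁r hv₂r
      rw [hv₁l, hv₂l] at h
      have hsum_r : z * r' + (1 - z) * r' = r' := by rw [sub_mul, one_mul]; abel
      rwa [hsum_r] at h
  constructor
  · obtain ⟨z, hz, hc, h1, h2⟩ := hgc p q hp hq
    obtain ⟨hrproj, hrp, hrq, hmax⟩ := key z hz hc h1 h2
    exact ⟨z * p + (1 - z) * q, hrproj, hrp, hrq, hmax⟩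
  · exact key

end AWStar
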